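/- Neyman orthogonality of the APO score: let φ(h; ψ, μ, ω) = μ(x) + 1{d'=d, z'=z}·(y − μ(x))/ω(x) − ψ. For perturbations μ_r = μ + r(μ̃ − μ) and ω_r = ω + r(ω̃ − ω), the Gateaux derivative of E[φ(H; ψ, μ_r, ω_r) | X=x] with respect to r, evaluated at r = 0 and at the true nuisance functions μ_d(z,·), ω_{d,z}(·), equals zero. -/

import Mathlib

open Finset
open scoped BigOperators Classical

noncomputable section

/-- Expectation with respect to a probability mass function on a finite sample space. -/
def pExp {Ω : Type*} [Fintype Ω] (p : Ω → ℝ) (f : Ω → ℝ) : ℝ := ∑ ω, p ω * f ω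

/-- Probability of an event. -/
def pPr {Ω : Type*} [Fintype Ω] (p : Ω → ℝ) (A : Set Ω) : ℝ :=
  ∑ ω, if ω ∈ A then p ω else 0

/-- Elementary conditional expectation given an event of positive probability. -/
def pCE {Ω : Type*} [Fintype Ω] (p : Ω → ℝ) (f : Ω → ℝ) (A : Set Ω) : ℝ :=
  (∑ ω, if ω ∈ A then p ω * f ω else 0) / pPr p A
/-- Neyman orthogonality of the APO score: the Gateaux derivative of the conditional
expectation of the score with respect to perturbations of the nuisance functions,
evaluated at the true nuisances, is zero. -/
theorem neyman_orthogonality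
    {Ω 𝕏 : Type*} [Fintype Ω] [Fintype 𝕏]
    (p : Ω → ℝ) (hp : ∀ ω, 0 ≤ p ω) (hpsum : ∑ ω, p ω = 1)
    (D Z : Ω → ℕ) (hD : ∀ ω, D ω = 0 ∨ D ω = 1) (hZ : ∀ ω, Z ω = 0 ∨ Z ω = 1)
    (X : Ω → 𝕏) (Y : Ω → ℝ)
    (d z : ℕ) (psi : ℝ)
    (hposX : ∀ x, 0 < pPr p {ω | X ω = x})
    (hpos : ∀ x, 0 < pPr p {ω | D ω = d ∧ Z ω = z ∧ X ω = x})
    (muT omT : 𝕏 → ℝ)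
    (hmuT : ∀ x, muT x = pCE p Y {ω | D ω = d ∧ Z ω = z ∧ X ω = x})
    (homT : ∀ x, omT x = pPr p {ω | D ω = d ∧ Z ω = z ∧ X ω = x} / pPr p {ω | X ω = x})
    (hom01 : ∀ x, 0 < omT x ∧ omT x < 1)
    (muP omP : 𝕏 → ℝ) (x : 𝕏) :
    deriv (fun r : ℝ =>
        pCE p (fun ω =>
            (muT (X ω) + r * (muP (X ω) - muT (X ω)))
              + (if D ω = d ∧ Z ω = z then (1:ℝ) else 0) *
                  (Y ω - (muT (X ω) + r * (muP (X ω) - muT (X ω)))) /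
                  (omT (X ω) + r * (omP (X ω) - omT (X ω)))
              - psi)
          {ω | X ω = x}) 0 = 0 := by
  classical
  have homx : 0 < omT x := (hom01 x).1
  have hPx : 0 < pPr p {ω | X ω = x} := hposX x
  have hPB : 0 < pPr p {ω | D ω = d ∧ Z ω = z ∧ X ω = x} := hpos x
  set dm : ℝ := muP x - muT x with hdm
  set dw : ℝ := omP x - omT x with hdw
  set dfun : Ω → ℝ := fun ω => if X ω = x then
      p ω * (dm + (if D ω = d ∧ Z ω = z then (1:ℝ) else 0) *
        ((-dm) * omT x - (Y ω - muT x) * dw) / (omT x)^2) else 0 with hdfun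
  -- abbreviations for the three relevant sums
  set Sx : ℝ := ∑ ω, if X ω = x then p ω else 0 with hSx
  set Sb : ℝ := ∑ ω, if D ω = d ∧ Z ω = z ∧ X ω = x then p ω else 0 with hSb
  set Sy : ℝ := ∑ ω, if D ω = d ∧ Z ω = z ∧ X ω = x then p ω * Y ω else 0 with hSy
  have hSxP : Sx = pPr p {ω | X ω = x} := by simp [hSx, pPr, Set.mem_setOf_eq]
  have hSbP : Sb = pPr p {ω | D ω = d ∧ Z ω = z ∧ X ω = x} := by
    rw [hSb, pPr]
    apply Finset.sum_congr rfl
    intro ω _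
    by_cases h : D ω = d ∧ Z ω = z ∧ X ω = x <;> simp [h, Set.mem_setOf_eq]
  have hSxpos : 0 < Sx := by rw [hSxP]; exact hPx
  have hSbpos : 0 < Sb := by rw [hSbP]; exact hPB
  have hom' : omT x * Sx = Sb := by
    rw [homT x, ← hSxP, ← hSbP, div_mul_cancel₀ _ hSxpos.ne']
  have hmu' : muT x * Sb = Sy := by
    have h1 : muT x = Sy / Sb := by
      rw [hmuT x, pCE, ← hSbP, hSy]
      congr 1
      apply Finset.sum_congr rfl
      intro ω _
      simp [Set.mem_setOf_eq]
    rw [h1, div_mul_cancel₀ _ hSbpos.ne']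
  -- rewrite the conditional expectation as a sum divided by a constant
  simp only [pCE, Set.mem_setOf_eq]
  rw [deriv_div_const]
  have hder : HasDerivAt (fun r : ℝ => ∑ ω, if X ω = x then
      p ω * ((muT (X ω) + r * (muP (X ω) - muT (X ω)))
        + (if D ω = d ∧ Z ω = z then (1:ℝ) else 0) *
            (Y ω - (muT (X ω) + r * (muP (X ω) - muT (X ω)))) /
            (omT (X ω) + r * (omP (X ω) - omT (X ω)))
        - psi) else 0) (∑ ω, dfun ω) 0 := by
    apply HasDerivAt.fun_sum
    intro ω _
    by_cases h : X ω = x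
    · simp only [h, eq_self_iff_true, if_true, mul_div_assoc]
      have h1 : HasDerivAt (fun r : ℝ => muT x + r * (muP x - muT x)) (muP x - muT x) 0 := by
        simpa using ((hasDerivAt_id (0:ℝ)).mul_const (muP x - muT x)).const_add (muT x)
      have h3 : HasDerivAt (fun r : ℝ => omT x + r * (omP x - omT x)) (omP x - omT x) 0 := by
        simpa using ((hasDerivAt_id (0:ℝ)).mul_const (omP x - omT x)).const_add (omT x)
      have h2 : HasDerivAt (fun r : ℝ => Y ω - (muT x + r * (muP x - muT x)))
          (-(muP x - muT x)) 0 := h1.const_sub (Y ω)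
      have hne : omT x + (0:ℝ) * (omP x - omT x) ≠ 0 := by simpa using homx.ne'
      have h4 := h2.div h3 hne
      have h5 := h4.const_mul (if D ω = d ∧ Z ω = z then (1:ℝ) else 0)
      have H := ((h1.add h5).sub_const psi).const_mul (p ω)
      have hval : dfun ω = p ω * ((muP x - muT x) +
          (if D ω = d ∧ Z ω = z then (1:ℝ) else 0) *
          ((-(muP x - muT x) * (omT x + 0 * (omP x - omT x)) -
            (Y ω - (muT x + 0 * (muP x - muT x))) * (omP x - omT x)) /
            (omT x + 0 * (omP x - omT x)) ^ 2)) := by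
        simp only [hdfun, if_pos h, hdm, hdw]
        ring
      rw [hval]
      exact H
    · simp only [if_neg h]
      have hval : dfun ω = 0 := by simp [hdfun, if_neg h]
      rw [hval]
      exact hasDerivAt_const 0 0
  rw [hder.deriv]
  have key : ∀ ω, dfun ω =
      dm * (if X ω = x then p ω else 0)
      + (-dm / omT x) * (if D ω = d ∧ Z ω = z ∧ X ω = x then p ω else 0)
      + (-dw / (omT x)^2) * ((if D ω = d ∧ Z ω = z ∧ X ω = x then p ω * Y ω else 0)
          - muT x * (if D ω = d ∧ Z ω = z ∧ X ω = x then p ω else 0)) := by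
    intro ω
    by_cases hx : X ω = x
    · by_cases hdz : D ω = d ∧ Z ω = z
      · have hB : D ω = d ∧ Z ω = z ∧ X ω = x := ⟨hdz.1, hdz.2, hx⟩
        simp only [hdfun, if_pos hx, if_pos hdz, if_pos hB]
        field_simp
        ring
      · have hB : ¬(D ω = d ∧ Z ω = z ∧ X ω = x) := by tauto
        simp only [hdfun, if_pos hx, if_neg hdz, if_neg hB]
        ring
    · have hB : ¬(D ω = d ∧ Z ω = z ∧ X ω = x) := by tauto
      simp only [hdfun, if_neg hx, if_neg hB]
      ring
  have hsum : ∑ ω, dfun ω = 0 := by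
    have : ∑ ω, dfun ω = dm * Sx + (-dm / omT x) * Sb + (-dw / (omT x)^2) * (Sy - muT x * Sb) := by
      simp only [key, Finset.sum_add_distrib, Finset.sum_sub_distrib, ← Finset.mul_sum,
        hSx, hSb, hSy]
    rw [this]
    have h0 : Sy - muT x * Sb = 0 := by rw [← hmu']; ring
    rw [h0, mul_zero, add_zero, ← hom']
    field_simp
    ring
  rw [hsum, zero_div]
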